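/- A Noetherian Λ-module M is (t−1)-invertible if and only if the annihilator Ann(M) contains a polynomial f(t) ∈ ℤ[t] with f(1) = 1. -/

import Mathlib

open Polynomial

/-- `Λ` is the ring `ℤ[t,t⁻¹]` of Laurent polynomials with integer coefficients. -/
abbrev Λ : Type := LaurentPolynomial ℤ

/-- `tL` is the element `t` of `Λ = ℤ[t,t⁻¹]`. -/
noncomputable def tL : Λ := LaurentPolynomial.T 1

lemma tL_eq_toLaurent_X : tL = Polynomial.toLaurent (Polynomial.X : Polynomial ℤ) := by
  simp [tL]

/-- evaluation of Laurent polynomials at 1 -/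
noncomputable def epsL : Λ →+* ℤ :=
  haveI := LaurentPolynomial.isLocalization (R := ℤ)
  IsLocalization.lift (M := Submonoid.powers (Polynomial.X : Polynomial ℤ)) (S := Λ)
    (g := Polynomial.evalRingHom (1 : ℤ)) (by
      rintro ⟨y, m, rfl⟩
      simp)

lemma epsL_toLaurent (f : Polynomial ℤ) : epsL (Polynomial.toLaurent f) = f.eval 1 := by
  haveI := LaurentPolynomial.isLocalization (R := ℤ)
  have := IsLocalization.lift_eq (M := Submonoid.powers (Polynomial.X : Polynomial ℤ)) (S := Λ)
    (g := Polynomial.evalRingHom (1 : ℤ)) (by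
      rintro ⟨y, m, rfl⟩
      simp) f
  simp at this; exact this

lemma epsL_tL_sub_one : epsL (tL - 1) = 0 := by
  have h1 : epsL tL = 1 := by
    rw [tL_eq_toLaurent_X, epsL_toLaurent]; simp
  rw [map_sub, h1, map_one, sub_self]

/-- A Noetherian Λ-module is (t−1)-invertible iff its annihilator contains a polynomial
`f` with `f(1) = 1`. -/
theorem t_sub_one_invertible_iff_ann_poly (M : Type) [AddCommGroup M] [Module Λ M]
    [IsNoetherian Λ M] :
    Function.Bijective (fun v : M => (tL - 1) • v) ↔
      ∃ f : Polynomial ℤ, f.eval 1 = 1 ∧ ∀ v : M, (Polynomial.toLaurent f) • v = 0 := by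
  constructor
  · intro hbij
    haveI : Module.Finite Λ M := ⟨IsNoetherian.noetherian ⊤⟩
    set φ : M →ₗ[Λ] M := LinearMap.lsmul Λ M (tL - 1) with hφdef
    have hφb : Function.Bijective φ := hbij
    let e : M ≃ₗ[Λ] M := LinearEquiv.ofBijective φ hφb
    set ψ : Module.End Λ M := (e.symm : M →ₗ[Λ] M) with hψdef
    obtain ⟨p, pmonic, hp⟩ := Algebra.IsIntegral.isIntegral (R := Λ) ψ
    set n := p.natDegree with hn
    -- basic facts about φ and ψ
    have hφ_apply : ∀ (k : ℕ) (w : M), (φ ^ k) w = ((tL - 1) ^ k) • w := by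
      intro k
      induction k with
      | zero => intro w; simp
      | succ k ih =>
          intro w
          rw [pow_succ', pow_succ']
          simp only [Module.End.mul_apply]
          rw [show φ ((φ ^ k) w) = (tL - 1) • ((φ ^ k) w) from rfl, ih, mul_smul]
    have hψφ : ∀ (i : ℕ) (w : M), (ψ ^ i) ((φ ^ i) w) = w := by
      intro i
      induction i with
      | zero => intro w; simp
      | succ i ih =>
          intro w
          rw [pow_succ, pow_succ']
          simp only [Module.End.mul_apply]
          have : ψ (φ ((φ ^ i) w)) = (φ ^ i) w := by
            show e.symm (e ((φ ^ i) w)) = (φ ^ i) w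
            exact e.symm_apply_apply _
          rw [this, ih]
    have hkey : ∀ i ∈ Finset.range (n + 1), ∀ v : M,
        (ψ ^ i) ((φ ^ n) v) = ((tL - 1) ^ (n - i)) • v := by
      intro i hi v
      have hin : i ≤ n := Nat.lt_succ_iff.mp (Finset.mem_range.mp hi)
      have hsplit : n = i + (n - i) := (Nat.add_sub_cancel' hin).symm
      have : (φ ^ n) v = (φ ^ i) ((φ ^ (n - i)) v) := by
        conv_lhs => rw [hsplit, pow_add, Module.End.mul_apply]
      rw [this, hψφ, hφ_apply]
    -- the annihilating Laurent polynomial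
    set g : Λ := ∑ i ∈ Finset.range (n + 1), p.coeff i * (tL - 1) ^ (n - i) with hg
    have hann : ∀ v : M, g • v = 0 := by
      intro v
      have h0 : (Polynomial.aeval ψ p) ((φ ^ n) v) = 0 := by
        rw [Polynomial.aeval_def, hp]; rfl
      rw [Polynomial.aeval_eq_sum_range] at h0
      rw [LinearMap.sum_apply] at h0
      have : ∀ i ∈ Finset.range (n + 1),
          (p.coeff i • ψ ^ i) ((φ ^ n) v) = (p.coeff i * (tL - 1) ^ (n - i)) • v := by
        intro i hi
        rw [LinearMap.smul_apply, hkey i hi v, smul_smul]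
      rw [Finset.sum_congr rfl this] at h0
      rw [hg, Finset.sum_smul]
      exact h0
    have hg1 : epsL g = 1 := by
      rw [hg, map_sum]
      rw [Finset.sum_eq_single n]
      · rw [map_mul, map_pow, epsL_tL_sub_one, Nat.sub_self, pow_zero, mul_one,
          pmonic.coeff_natDegree, map_one]
      · intro i hi hine
        have : 0 < n - i := by
          have := Nat.lt_succ_iff.mp (Finset.mem_range.mp hi)
          omega
        rw [map_mul, map_pow, epsL_tL_sub_one, zero_pow (by omega), mul_zero]
      · intro h
        exact absurd (Finset.self_mem_range_succ n) h
    obtain ⟨m, f, hf⟩ := g.exists_T_pow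
    refine ⟨f, ?_, ?_⟩
    · have := congrArg epsL hf
      rw [epsL_toLaurent, map_mul, hg1, one_mul] at this
      have hT : epsL (LaurentPolynomial.T (m : ℤ)) = 1 := by
        rw [show (LaurentPolynomial.T (m : ℤ) : Λ) = Polynomial.toLaurent (Polynomial.X ^ m) by
          simp, epsL_toLaurent]
        simp
      rw [hT] at this
      exact this
    · intro v
      rw [hf, mul_comm, mul_smul, hann, smul_zero]
  · rintro ⟨f, hf1, hfv⟩
    obtain ⟨g, hgf⟩ := Polynomial.X_sub_C_dvd_sub_C_eval (a := (1 : ℤ)) (p := f)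
    have hfd : Polynomial.toLaurent f = 1 + (tL - 1) * Polynomial.toLaurent g := by
      have : f = Polynomial.C (f.eval 1) + (Polynomial.X - Polynomial.C 1) * g := by
        rw [← hgf]; ring
      rw [this, hf1, map_add, map_mul, map_sub]
      simp [tL_eq_toLaurent_X]
    have hkey : ∀ v : M, v + (tL - 1) • ((Polynomial.toLaurent g) • v) = 0 := by
      intro v
      have := hfv v
      rw [hfd, add_smul, one_smul, mul_smul] at this
      exact this
    have hkey2 : ∀ v : M, v = -((Polynomial.toLaurent g) • ((tL - 1) • v)) := by
      intro v
      have h := hkey v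
      rw [smul_comm] at h
      exact (eq_neg_of_add_eq_zero_left h)
    constructor
    · intro a b hab
      simp only at hab
      rw [hkey2 a, hkey2 b, hab]
    · intro v
      refine ⟨(-(Polynomial.toLaurent g)) • v, ?_⟩
      have h := hkey v
      simp only [smul_neg, neg_smul]
      exact neg_eq_of_add_eq_zero_left h
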